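/- (Monotone decrease of the loss for β = 1.) Let p be a strictly positive joint pmf on Fin m × Fin n and q a strictly positive conditional pmf. Then the LatentSearch update with β = 1 produces a strictly positive conditional pmf T_1(q), and the loss does not increase: L_1(T_1(q)) ≤ L_1(q). -/

import Mathlib

open Real Finset Filter

/-- A strictly positive joint pmf on `Fin m × Fin n`. -/
def IsJointPMF {m n : ℕ} (p : Fin m → Fin n → ℝ) : Prop :=
  (∀ x y, 0 < p x y) ∧ (∑ x, ∑ y, p x y = 1)

/-- A strictly positive conditional pmf `q z x y = q(z | x, y)`. -/
def IsCondPMF {m n k : ℕ} (q : Fin k → Fin m → Fin n → ℝ) : Prop :=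
  (∀ z x y, 0 < q z x y) ∧ (∀ x y, ∑ z, q z x y = 1)

/-- Marginal `q(z | x)`. -/
noncomputable def qX {m n k : ℕ} (p : Fin m → Fin n → ℝ)
    (q : Fin k → Fin m → Fin n → ℝ) (z : Fin k) (x : Fin m) : ℝ :=
  (∑ y, q z x y * p x y) / (∑ y, p x y)

/-- Marginal `q(z | y)`. -/
noncomputable def qY {m n k : ℕ} (p : Fin m → Fin n → ℝ)
    (q : Fin k → Fin m → Fin n → ℝ) (z : Fin k) (y : Fin n) : ℝ :=
  (∑ x, q z x y * p x y) / (∑ x, p x y)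

/-- Marginal `q(z)`. -/
noncomputable def qZ {m n k : ℕ} (p : Fin m → Fin n → ℝ)
    (q : Fin k → Fin m → Fin n → ℝ) (z : Fin k) : ℝ :=
  ∑ x, ∑ y, q z x y * p x y

/-- The LatentSearch update `T_β(q)`. Here `(qZ z) ^ (1 - β)` is the real power `rpow`. -/
noncomputable def latentUpdate {m n k : ℕ} (β : ℝ) (p : Fin m → Fin n → ℝ)
    (q : Fin k → Fin m → Fin n → ℝ) : Fin k → Fin m → Fin n → ℝ :=
  fun z x y =>
    (qX p q z x * qY p q z y / (qZ p q z) ^ (1 - β)) /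
      (∑ z', qX p q z' x * qY p q z' y / (qZ p q z') ^ (1 - β))

/-- The loss `L_β(q) = I(X;Y|Z) + β H(Z)` computed from the joint `r(x,y,z) = q z x y * p x y`. -/
noncomputable def loss {m n k : ℕ} (β : ℝ) (p : Fin m → Fin n → ℝ)
    (q : Fin k → Fin m → Fin n → ℝ) : ℝ :=
  (∑ x, ∑ y, ∑ z, (q z x y * p x y) *
      Real.log ((q z x y * p x y) * qZ p q z /
        ((∑ y', q z x y' * p x y') * (∑ x', q z x' y * p x' y)))) -
    β * ∑ z, qZ p q z * Real.log (qZ p q z)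

/-- The mutual information `I(X;Y)` of the observed joint pmf `p`. -/
noncomputable def mutualInfo {m n : ℕ} (p : Fin m → Fin n → ℝ) : ℝ :=
  ∑ x, ∑ y, p x y * Real.log (p x y / ((∑ y', p x y') * (∑ x', p x' y)))

section Aux
variable {m n k : ℕ} {p : Fin m → Fin n → ℝ} {c : Fin k → Fin m → Fin n → ℝ}

lemma pX_pos (hn : 1 ≤ n) (hp : ∀ x y, 0 < p x y) (x : Fin m) : 0 < ∑ y, p x y :=
  Finset.sum_pos (fun y _ => hp x y) ⟨⟨0, hn⟩, Finset.mem_univ _⟩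
lemma pY_pos (hm : 1 ≤ m) (hp : ∀ x y, 0 < p x y) (y : Fin n) : 0 < ∑ x, p x y :=
  Finset.sum_pos (fun x _ => hp x y) ⟨⟨0, hm⟩, Finset.mem_univ _⟩
lemma qX_pos (hn : 1 ≤ n) (hp : ∀ x y, 0 < p x y) (hc : ∀ z x y, 0 < c z x y)
    (z : Fin k) (x : Fin m) : 0 < qX p c z x :=
  div_pos (Finset.sum_pos (fun y _ => mul_pos (hc z x y) (hp x y)) ⟨⟨0, hn⟩, Finset.mem_univ _⟩)
    (pX_pos hn hp x)
lemma qY_pos (hm : 1 ≤ m) (hp : ∀ x y, 0 < p x y) (hc : ∀ z x y, 0 < c z x y)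
    (z : Fin k) (y : Fin n) : 0 < qY p c z y :=
  div_pos (Finset.sum_pos (fun x _ => mul_pos (hc z x y) (hp x y)) ⟨⟨0, hm⟩, Finset.mem_univ _⟩)
    (pY_pos hm hp y)
lemma qZ_pos (hm : 1 ≤ m) (hn : 1 ≤ n) (hp : ∀ x y, 0 < p x y)
    (hc : ∀ z x y, 0 < c z x y) (z : Fin k) : 0 < qZ p c z :=
  Finset.sum_pos (fun x _ => Finset.sum_pos (fun y _ => mul_pos (hc z x y) (hp x y))
    ⟨⟨0, hn⟩, Finset.mem_univ _⟩) ⟨⟨0, hm⟩, Finset.mem_univ _⟩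
lemma sum_y_eq (hn : 1 ≤ n) (hp : ∀ x y, 0 < p x y) (z : Fin k) (x : Fin m) :
    ∑ y, c z x y * p x y = qX p c z x * ∑ y, p x y := by
  rw [qX, div_mul_cancel₀ _ (ne_of_gt (pX_pos hn hp x))]
lemma sum_x_eq (hm : 1 ≤ m) (hp : ∀ x y, 0 < p x y) (z : Fin k) (y : Fin n) :
    ∑ x, c z x y * p x y = qY p c z y * ∑ x, p x y := by
  rw [qY, div_mul_cancel₀ _ (ne_of_gt (pY_pos hm hp y))]

lemma loss_eq (hm : 1 ≤ m) (hn : 1 ≤ n)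
    (hp : IsJointPMF p) (hc : IsCondPMF c) :
    loss 1 p c = mutualInfo p + ∑ x, ∑ y, ∑ z, c z x y * p x y *
      (Real.log (c z x y) - Real.log (qX p c z x) - Real.log (qY p c z y)) := by
  have hpp := hp.1
  have hcc := hc.1
  have ptwise : ∀ (x : Fin m) (y : Fin n) (z : Fin k),
      (c z x y * p x y) * Real.log ((c z x y * p x y) * qZ p c z /
        ((∑ y', c z x y' * p x y') * (∑ x', c z x' y * p x' y)))
      = c z x y * p x y *
          (Real.log (c z x y) - Real.log (qX p c z x) - Real.log (qY p c z y))
        + c z x y * p x y *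
          (Real.log (p x y) - Real.log (∑ y', p x y') - Real.log (∑ x', p x' y))
        + c z x y * p x y * Real.log (qZ p c z) := by
    intro x y z
    have hS1 : (0:ℝ) < ∑ y', c z x y' * p x y' :=
      Finset.sum_pos (fun y' _ => mul_pos (hcc z x y') (hpp x y')) ⟨⟨0, hn⟩, Finset.mem_univ _⟩
    have hS2 : (0:ℝ) < ∑ x', c z x' y * p x' y :=
      Finset.sum_pos (fun x' _ => mul_pos (hcc z x' y) (hpp x' y)) ⟨⟨0, hm⟩, Finset.mem_univ _⟩
    have hqz := qZ_pos hm hn hpp hcc z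
    have e0 : Real.log ((c z x y * p x y) * qZ p c z /
        ((∑ y', c z x y' * p x y') * (∑ x', c z x' y * p x' y)))
        = Real.log (c z x y) + Real.log (p x y) + Real.log (qZ p c z)
          - Real.log (∑ y', c z x y' * p x y') - Real.log (∑ x', c z x' y * p x' y) := by
      rw [Real.log_div (ne_of_gt (mul_pos (mul_pos (hcc z x y) (hpp x y)) hqz))
          (ne_of_gt (mul_pos hS1 hS2)),
        Real.log_mul (ne_of_gt (mul_pos (hcc z x y) (hpp x y))) (ne_of_gt hqz),
        Real.log_mul (ne_of_gt (hcc z x y)) (ne_of_gt (hpp x y)),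
        Real.log_mul (ne_of_gt hS1) (ne_of_gt hS2)]
      ring
    have e1 : Real.log (∑ y', c z x y' * p x y')
        = Real.log (qX p c z x) + Real.log (∑ y', p x y') := by
      rw [sum_y_eq hn hpp z x,
        Real.log_mul (ne_of_gt (qX_pos hn hpp hcc z x)) (ne_of_gt (pX_pos hn hpp x))]
    have e2 : Real.log (∑ x', c z x' y * p x' y)
        = Real.log (qY p c z y) + Real.log (∑ x', p x' y) := by
      rw [sum_x_eq hm hpp z y,
        Real.log_mul (ne_of_gt (qY_pos hm hpp hcc z y)) (ne_of_gt (pY_pos hm hpp y))]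
    rw [e0, e1, e2]; ring
  have hC : ∑ x, ∑ y, ∑ z, c z x y * p x y * Real.log (qZ p c z)
      = ∑ z, qZ p c z * Real.log (qZ p c z) := by
    rw [Finset.sum_congr rfl fun x _ => Finset.sum_comm, Finset.sum_comm]
    refine Finset.sum_congr rfl fun z _ => ?_
    simp only [← Finset.sum_mul]
    rfl
  have hB : ∑ x, ∑ y, ∑ z, c z x y * p x y *
      (Real.log (p x y) - Real.log (∑ y', p x y') - Real.log (∑ x', p x' y))
      = mutualInfo p := by
    rw [mutualInfo]
    refine Finset.sum_congr rfl fun x _ => Finset.sum_congr rfl fun y _ => ?_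
    simp only [mul_assoc]
    rw [← Finset.sum_mul, hc.2, one_mul,
      Real.log_div (ne_of_gt (hpp x y))
        (ne_of_gt (mul_pos (pX_pos hn hpp x) (pY_pos hm hpp y))),
      Real.log_mul (ne_of_gt (pX_pos hn hpp x)) (ne_of_gt (pY_pos hm hpp y))]
    ring
  rw [loss, one_mul,
    Finset.sum_congr rfl fun x _ => Finset.sum_congr rfl fun y _ =>
      Finset.sum_congr rfl fun z _ => ptwise x y z]
  simp only [Finset.sum_add_distrib]
  rw [hB, hC]
  ring

lemma gibbs' {ι : Type*} (s : Finset ι) (u v : ι → ℝ)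
    (hu : ∀ i ∈ s, 0 < u i) (hv : ∀ i ∈ s, 0 < v i)
    (hs : ∑ i ∈ s, v i ≤ ∑ i ∈ s, u i) :
    ∑ i ∈ s, u i * (Real.log (v i) - Real.log (u i)) ≤ 0 := by
  have key : ∀ i ∈ s, u i * (Real.log (v i) - Real.log (u i)) ≤ v i - u i := by
    intro i hi
    have hui := hu i hi; have hvi := hv i hi
    rw [← Real.log_div (ne_of_gt hvi) (ne_of_gt hui)]
    have h1 : Real.log (v i / u i) ≤ v i / u i - 1 :=
      Real.log_le_sub_one_of_pos (div_pos hvi hui)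
    have h2 : u i * (v i / u i - 1) = v i - u i := by field_simp
    nlinarith
  calc ∑ i ∈ s, u i * (Real.log (v i) - Real.log (u i)) ≤ ∑ i ∈ s, (v i - u i) :=
        Finset.sum_le_sum key
    _ = (∑ i ∈ s, v i) - ∑ i ∈ s, u i := Finset.sum_sub_distrib v u
    _ ≤ 0 := by linarith

lemma sum_qXc (hn : 1 ≤ n) (hp : ∀ x y, 0 < p x y) (hc : IsCondPMF c) (x : Fin m) :
    ∑ z, qX p c z x = 1 := by
  simp only [qX, ← Finset.sum_div]
  rw [Finset.sum_comm]
  have h : ∀ y : Fin n, ∑ z, c z x y * p x y = p x y := by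
    intro y; rw [← Finset.sum_mul, hc.2, one_mul]
  rw [Finset.sum_congr rfl fun y _ => h y, div_self (ne_of_gt (pX_pos hn hp x))]

lemma sum_qYc (hm : 1 ≤ m) (hp : ∀ x y, 0 < p x y) (hc : IsCondPMF c) (y : Fin n) :
    ∑ z, qY p c z y = 1 := by
  simp only [qY, ← Finset.sum_div]
  rw [Finset.sum_comm]
  have h : ∀ x : Fin m, ∑ z, c z x y * p x y = p x y := by
    intro x; rw [← Finset.sum_mul, hc.2, one_mul]
  rw [Finset.sum_congr rfl fun x _ => h x, div_self (ne_of_gt (pY_pos hm hp y))]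

/-- Replacing the true X-marginal by any other conditional pmf can only increase the loss. -/
lemma margX_min (hm : 1 ≤ m) (hn : 1 ≤ n) (hp : ∀ x y, 0 < p x y) (hc : IsCondPMF c)
    (a : Fin k → Fin m → ℝ) (ha : ∀ z x, 0 < a z x) (ha1 : ∀ x, ∑ z, a z x = 1) :
    ∑ x, ∑ y, ∑ z, c z x y * p x y * (Real.log (a z x) - Real.log (qX p c z x)) ≤ 0 := by
  apply Finset.sum_nonpos
  intro x _
  rw [Finset.sum_comm]
  have hin : ∀ z : Fin k, ∑ y, c z x y * p x y * (Real.log (a z x) - Real.log (qX p c z x))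
      = (∑ y, p x y) * (qX p c z x * (Real.log (a z x) - Real.log (qX p c z x))) := by
    intro z
    rw [← Finset.sum_mul, sum_y_eq hn hp z x]
    ring
  rw [Finset.sum_congr rfl fun z _ => hin z, ← Finset.mul_sum]
  apply mul_nonpos_of_nonneg_of_nonpos (le_of_lt (pX_pos hn hp x))
  exact gibbs' Finset.univ _ _ (fun z _ => qX_pos hn hp hc.1 z x) (fun z _ => ha z x)
    (by rw [ha1 x, sum_qXc hn hp hc x])

lemma margY_min (hm : 1 ≤ m) (hn : 1 ≤ n) (hp : ∀ x y, 0 < p x y) (hc : IsCondPMF c)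
    (b : Fin k → Fin n → ℝ) (hb : ∀ z y, 0 < b z y) (hb1 : ∀ y, ∑ z, b z y = 1) :
    ∑ x, ∑ y, ∑ z, c z x y * p x y * (Real.log (b z y) - Real.log (qY p c z y)) ≤ 0 := by
  rw [Finset.sum_comm]
  apply Finset.sum_nonpos
  intro y _
  rw [Finset.sum_comm]
  have hin : ∀ z : Fin k, ∑ x, c z x y * p x y * (Real.log (b z y) - Real.log (qY p c z y))
      = (∑ x, p x y) * (qY p c z y * (Real.log (b z y) - Real.log (qY p c z y))) := by
    intro z
    rw [← Finset.sum_mul, sum_x_eq hm hp z y]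
    ring
  rw [Finset.sum_congr rfl fun z _ => hin z, ← Finset.mul_sum]
  apply mul_nonpos_of_nonneg_of_nonpos (le_of_lt (pY_pos hm hp y))
  exact gibbs' Finset.univ _ _ (fun z _ => qY_pos hm hp hc.1 z y) (fun z _ => hb z y)
    (by rw [hb1 y, sum_qYc hm hp hc y])


lemma update_eq (q : Fin k → Fin m → Fin n → ℝ) (z : Fin k) (x : Fin m) (y : Fin n) :
    latentUpdate 1 p q z x y
      = qX p q z x * qY p q z y / (∑ z', qX p q z' x * qY p q z' y) := by
  simp [latentUpdate, sub_self, Real.rpow_zero]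

lemma Npos (hm : 1 ≤ m) (hn : 1 ≤ n) (hk : 1 ≤ k) (hp : ∀ x y, 0 < p x y)
    (hq : ∀ z x y, 0 < c z x y) (x : Fin m) (y : Fin n) :
    0 < ∑ z, qX p c z x * qY p c z y :=
  Finset.sum_pos (fun z _ => mul_pos (qX_pos hn hp hq z x) (qY_pos hm hp hq z y))
    ⟨⟨0, hk⟩, Finset.mem_univ _⟩

lemma update_isCondPMF (hm : 1 ≤ m) (hn : 1 ≤ n) (hk : 1 ≤ k)
    (hp : ∀ x y, 0 < p x y) (hq : ∀ z x y, 0 < c z x y) :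
    IsCondPMF (latentUpdate 1 p c) := by
  constructor
  · intro z x y
    rw [update_eq]
    exact div_pos (mul_pos (qX_pos hn hp hq z x) (qY_pos hm hp hq z y))
      (Npos hm hn hk hp hq x y)
  · intro x y
    rw [Finset.sum_congr rfl fun z _ => update_eq c z x y, ← Finset.sum_div,
      div_self (ne_of_gt (Npos hm hn hk hp hq x y))]

/-- The value of the inner functional at the updated conditional pmf. -/
lemma J_at_update (hm : 1 ≤ m) (hn : 1 ≤ n) (hk : 1 ≤ k)
    (hp : ∀ x y, 0 < p x y) (hq : ∀ z x y, 0 < c z x y) :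
    ∑ x, ∑ y, ∑ z, latentUpdate 1 p c z x y * p x y *
        (Real.log (latentUpdate 1 p c z x y) - Real.log (qX p c z x) - Real.log (qY p c z y))
      = ∑ x, ∑ y, p x y * (-Real.log (∑ z, qX p c z x * qY p c z y)) := by
  refine Finset.sum_congr rfl fun x _ => Finset.sum_congr rfl fun y _ => ?_
  have hN := Npos hm hn hk hp hq x y
  have e : ∀ z : Fin k, latentUpdate 1 p c z x y * p x y *
      (Real.log (latentUpdate 1 p c z x y) - Real.log (qX p c z x) - Real.log (qY p c z y))
      = latentUpdate 1 p c z x y *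
          (p x y * (-Real.log (∑ z', qX p c z' x * qY p c z' y))) := by
    intro z
    rw [update_eq, Real.log_div
      (ne_of_gt (mul_pos (qX_pos hn hp hq z x) (qY_pos hm hp hq z y))) (ne_of_gt hN),
      Real.log_mul (ne_of_gt (qX_pos hn hp hq z x)) (ne_of_gt (qY_pos hm hp hq z y))]
    ring
  rw [Finset.sum_congr rfl fun z _ => e z, ← Finset.sum_mul,
    (update_isCondPMF hm hn hk hp hq).2 x y, one_mul]

/-- Lower bound for the inner functional. -/
lemma J_lower (hk : 1 ≤ k) (hp : ∀ x y, 0 < p x y) (hq : IsCondPMF c)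
    (a : Fin k → Fin m → ℝ) (ha : ∀ z x, 0 < a z x)
    (b : Fin k → Fin n → ℝ) (hb : ∀ z y, 0 < b z y) :
    ∑ x, ∑ y, p x y * (-Real.log (∑ z, a z x * b z y)) ≤
      ∑ x, ∑ y, ∑ z, c z x y * p x y *
        (Real.log (c z x y) - Real.log (a z x) - Real.log (b z y)) := by
  refine Finset.sum_le_sum fun x _ => Finset.sum_le_sum fun y _ => ?_
  have hN : 0 < ∑ z, a z x * b z y :=
    Finset.sum_pos (fun z _ => mul_pos (ha z x) (hb z y)) ⟨⟨0, hk⟩, Finset.mem_univ _⟩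
  have hg := gibbs' Finset.univ (fun z => c z x y)
    (fun z => a z x * b z y / (∑ z', a z' x * b z' y))
    (fun z _ => hq.1 z x y)
    (fun z _ => div_pos (mul_pos (ha z x) (hb z y)) hN)
    (by rw [← Finset.sum_div, div_self (ne_of_gt hN), hq.2])
  have expand : ∀ z : Fin k,
      c z x y * (Real.log (a z x * b z y / (∑ z', a z' x * b z' y)) - Real.log (c z x y))
      = c z x y * (Real.log (a z x) + Real.log (b z y) - Real.log (c z x y))
        - c z x y * Real.log (∑ z', a z' x * b z' y) := by
    intro z
    rw [Real.log_div (ne_of_gt (mul_pos (ha z x) (hb z y))) (ne_of_gt hN),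
      Real.log_mul (ne_of_gt (ha z x)) (ne_of_gt (hb z y))]
    ring
  rw [Finset.sum_congr rfl fun z _ => expand z, Finset.sum_sub_distrib,
    ← Finset.sum_mul, hq.2, one_mul] at hg
  have hsum : ∑ z, c z x y * p x y *
      (Real.log (c z x y) - Real.log (a z x) - Real.log (b z y))
      = p x y * ∑ z, c z x y *
          (Real.log (c z x y) - Real.log (a z x) - Real.log (b z y)) := by
    rw [Finset.mul_sum]; exact Finset.sum_congr rfl fun z _ => by ring
  rw [hsum]
  have h2 : ∑ z, c z x y *
      (Real.log (c z x y) - Real.log (a z x) - Real.log (b z y))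
      = -∑ z, c z x y *
          (Real.log (a z x) + Real.log (b z y) - Real.log (c z x y)) := by
    rw [← Finset.sum_neg_distrib]
    exact Finset.sum_congr rfl fun z _ => by ring
  have hAB : -Real.log (∑ z, a z x * b z y) ≤ ∑ z, c z x y *
      (Real.log (c z x y) - Real.log (a z x) - Real.log (b z y)) := by
    rw [h2]; linarith
  exact mul_le_mul_of_nonneg_left hAB (le_of_lt (hp x y))

end Aux

/-- Monotone decrease of the loss for `β = 1`: the LatentSearch update with
`β = 1` produces a strictly positive conditional pmf and does not increase the loss. -/
theorem latentUpdate_loss_nonincreasing (m n k : ℕ)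
    (hm : 1 ≤ m) (hn : 1 ≤ n) (hk : 1 ≤ k)
    (p : Fin m → Fin n → ℝ) (hp : IsJointPMF p)
    (q : Fin k → Fin m → Fin n → ℝ) (hq : IsCondPMF q) :
    IsCondPMF (latentUpdate 1 p q) ∧ loss 1 p (latentUpdate 1 p q) ≤ loss 1 p q := by
  have hpp := hp.1
  have hT : IsCondPMF (latentUpdate 1 p q) := update_isCondPMF hm hn hk hpp hq.1
  refine ⟨hT, ?_⟩
  rw [loss_eq hm hn hp hq, loss_eq hm hn hp hT]
  have split : ∑ x, ∑ y, ∑ z, latentUpdate 1 p q z x y * p x y *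
        (Real.log (latentUpdate 1 p q z x y)
          - Real.log (qX p (latentUpdate 1 p q) z x)
          - Real.log (qY p (latentUpdate 1 p q) z y))
      = (∑ x, ∑ y, ∑ z, latentUpdate 1 p q z x y * p x y *
          (Real.log (latentUpdate 1 p q z x y)
            - Real.log (qX p q z x) - Real.log (qY p q z y)))
        + (∑ x, ∑ y, ∑ z, latentUpdate 1 p q z x y * p x y *
            (Real.log (qX p q z x) - Real.log (qX p (latentUpdate 1 p q) z x)))
        + (∑ x, ∑ y, ∑ z, latentUpdate 1 p q z x y * p x y *
            (Real.log (qY p q z y) - Real.log (qY p (latentUpdate 1 p q) z y))) := by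
    simp only [← Finset.sum_add_distrib]
    exact Finset.sum_congr rfl fun x _ => Finset.sum_congr rfl fun y _ =>
      Finset.sum_congr rfl fun z _ => by ring
  have h1 := margX_min hm hn hpp hT (qX p q)
    (fun z x => qX_pos hn hpp hq.1 z x) (fun x => sum_qXc hn hpp hq x)
  have h2 := margY_min hm hn hpp hT (qY p q)
    (fun z y => qY_pos hm hpp hq.1 z y) (fun y => sum_qYc hm hpp hq y)
  have h3 := J_at_update hm hn hk hpp hq.1
  have h4 := J_lower hk hpp hq (qX p q)
    (fun z x => qX_pos hn hpp hq.1 z x) (qY p q) (fun z y => qY_pos hm hpp hq.1 z y)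
  linarith
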